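/- In the time-invariant misspecified Kalman setting, for all t ≥ 1 and s ≥ 1 the lag-s cross-covariance matrix of the misspecified forecast errors satisfies Cov(v'_t, v'_{t+s}) = Cov(v'_t, a_{t+1} − a'_{t+1}) · ( (T L'_{t+s−1})(T L'_{t+s−2}) ⋯ (T L'_{t+1}) )ᵀ · Zᵀ, where for s = 1 the ordered matrix product is the identity matrix I_p, and Cov(u, w) := E[(u − E u)(w − E w)ᵀ] for random vectors u, w. -/

import Mathlib

open Matrix MeasureTheory

section Aux

variable {Ω : Type*} {m0 : MeasurableSpace Ω} {μ : Measure Ω}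

theorem l2_int_mul {F G : Ω → ℝ} (hF : MemLp F 2 μ) (hG : MemLp G 2 μ) :
    Integrable (fun ω => F ω * G ω) μ := by
  have h : MemLp (F • G) 1 μ := hG.smul hF (hpqr := ⟨by simp [ENNReal.inv_two_add_inv_two, one_div]⟩)
  rw [memLp_one_iff_integrable] at h
  exact h

theorem cov_centered_eq [IsProbabilityMeasure μ] {F G : Ω → ℝ}
    (hF : MemLp F 2 μ) (hG : MemLp G 2 μ) :
    ∫ ω, (F ω - ∫ ω', F ω' ∂μ) * (G ω - ∫ ω', G ω' ∂μ) ∂μ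
      = (∫ ω, F ω * G ω ∂μ) - (∫ ω, F ω ∂μ) * (∫ ω, G ω ∂μ) := by
  set mF := ∫ ω', F ω' ∂μ
  set mG := ∫ ω', G ω' ∂μ
  have hFi : Integrable F μ := hF.integrable one_le_two
  have hGi : Integrable G μ := hG.integrable one_le_two
  have h1 : (fun ω => (F ω - mF) * (G ω - mG))
      = fun ω => F ω * G ω - mG * F ω - (mF * G ω - mF * mG) := by
    funext ω; ring
  have i1 : Integrable (fun ω => F ω * G ω - mG * F ω) μ :=
    (l2_int_mul hF hG).sub (hFi.const_mul mG)
  have i2 : Integrable (fun ω => mF * G ω - mF * mG) μ :=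
    (hGi.const_mul mF).sub (integrable_const _)
  rw [h1, integral_sub i1 i2,
    integral_sub (l2_int_mul hF hG) (hFi.const_mul mG),
    integral_sub (hGi.const_mul mF) (integrable_const _),
    MeasureTheory.integral_const_mul, MeasureTheory.integral_const_mul, integral_const]
  simp [mF, mG]
  ring

/-- covariance against a matrix-vector product expands into a sum of covariances -/
theorem cov_mulVec [IsFiniteMeasure μ] {q m : ℕ} (M : Matrix (Fin q) (Fin m) ℝ) {F : Ω → ℝ}
    (hF : MemLp F 2 μ) {g : Ω → Fin m → ℝ}
    (hg : ∀ k, MemLp (fun ω => g ω k) 2 μ) (j : Fin q) :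
    (∫ ω, F ω * M.mulVec (g ω) j ∂μ)
        - (∫ ω, F ω ∂μ) * (∫ ω, M.mulVec (g ω) j ∂μ)
      = ∑ k, M j k *
          ((∫ ω, F ω * g ω k ∂μ) - (∫ ω, F ω ∂μ) * ∫ ω, g ω k ∂μ) := by
  have hgi : ∀ k, Integrable (fun ω => g ω k) μ := fun k => (hg k).integrable one_le_two
  have h1 : (fun ω => F ω * M.mulVec (g ω) j)
      = fun ω => ∑ k, M j k * (F ω * g ω k) := by
    funext ω
    simp only [Matrix.mulVec, dotProduct, Finset.mul_sum]
    exact Finset.sum_congr rfl fun k _ => by ring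
  have h2 : (fun ω => M.mulVec (g ω) j) = fun ω => ∑ k, M j k * g ω k := by
    funext ω; simp [Matrix.mulVec, dotProduct]
  rw [h1, h2, integral_finset_sum _ (fun k _ => (l2_int_mul hF (hg k)).const_mul (M j k)),
    integral_finset_sum _ (fun k _ => (hgi k).const_mul (M j k))]
  simp only [MeasureTheory.integral_const_mul, Finset.mul_sum, ← Finset.sum_sub_distrib]
  exact Finset.sum_congr rfl fun k _ => by ring

theorem cov_add_right [IsFiniteMeasure μ] {F G H : Ω → ℝ} (hF : MemLp F 2 μ) (hG : MemLp G 2 μ)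
    (hH : MemLp H 2 μ) :
    (∫ ω, F ω * (G ω + H ω) ∂μ) - (∫ ω, F ω ∂μ) * (∫ ω, (G ω + H ω) ∂μ)
      = ((∫ ω, F ω * G ω ∂μ) - (∫ ω, F ω ∂μ) * (∫ ω, G ω ∂μ))
        + ((∫ ω, F ω * H ω ∂μ) - (∫ ω, F ω ∂μ) * (∫ ω, H ω ∂μ)) := by
  have h1 : (fun ω => F ω * (G ω + H ω)) = fun ω => F ω * G ω + F ω * H ω := by
    funext ω; ring
  rw [h1, integral_add (l2_int_mul hF hG) (l2_int_mul hF hH),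
    integral_add (hG.integrable one_le_two) (hH.integrable one_le_two)]
  ring

end Aux

/-- In the time-invariant misspecified Kalman setting, for all `t ≥ 1`
and `s ≥ 1`,
`Cov(v'_t, v'_{t+s}) = Cov(v'_t, a_{t+1} − a'_{t+1}) ((T L'_{t+s−1}) ⋯ (T L'_{t+1}))ᵀ Zᵀ`,
where for `s = 1` the ordered product is the identity matrix. -/
theorem cov_misspecified_errors_lag
    {Ω : Type*} {m0 : MeasurableSpace Ω} (μ : Measure Ω) [IsProbabilityMeasure μ]
    (ℱ : Filtration ℕ m0) (hℱ0 : ℱ 0 = ⊥)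
    {d p : ℕ}
    (Z : Matrix (Fin d) (Fin p) ℝ) (T : Matrix (Fin p) (Fin p) ℝ)
    (K K' : ℕ → Matrix (Fin p) (Fin d) ℝ)
    (L' : ℕ → Matrix (Fin p) (Fin p) ℝ)
    (hL' : ∀ t, L' t = 1 - K' t * Z)
    (y : ℕ → Ω → Fin d → ℝ)
    (hy_meas : ∀ t, StronglyMeasurable[ℱ t] (y t))
    (hy_L2 : ∀ t, MemLp (y t) 2 μ)
    (a a' : ℕ → Ω → Fin p → ℝ)
    (a₁ a₁' : Fin p → ℝ)
    (ha1 : ∀ ω, a 1 ω = a₁) (ha1' : ∀ ω, a' 1 ω = a₁')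
    (ha : ∀ t, 1 ≤ t → ∀ ω,
      a (t + 1) ω = T.mulVec (a t ω) + T.mulVec ((K t).mulVec (y t ω - Z.mulVec (a t ω))))
    (ha' : ∀ t, 1 ≤ t → ∀ ω,
      a' (t + 1) ω
        = T.mulVec (a' t ω) + T.mulVec ((K' t).mulVec (y t ω - Z.mulVec (a' t ω))))
    (ha_L2 : ∀ t, MemLp (a t) 2 μ) (ha'_L2 : ∀ t, MemLp (a' t) 2 μ)
    (v' : ℕ → Ω → Fin d → ℝ)
    (hv' : ∀ t ω, v' t ω = y t ω - Z.mulVec (a' t ω))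
    (hcond : ∀ t, 1 ≤ t → μ[y t | ℱ (t - 1)] =ᵐ[μ] fun ω => Z.mulVec (a t ω)) :
    ∀ t : ℕ, 1 ≤ t → ∀ s : ℕ, 1 ≤ s →
      (Matrix.of fun i j =>
          ∫ ω, (v' t ω i - ∫ ω', v' t ω' i ∂μ)
            * (v' (t + s) ω j - ∫ ω', v' (t + s) ω' j ∂μ) ∂μ)
      = (Matrix.of fun i j =>
            ∫ ω, (v' t ω i - ∫ ω', v' t ω' i ∂μ)
              * ((a (t + 1) ω j - a' (t + 1) ω j)
                - ∫ ω', (a (t + 1) ω' j - a' (t + 1) ω' j) ∂μ) ∂μ)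
          * (((List.range (s - 1)).map fun i => T * L' (t + s - 1 - i)).prod)ᵀ * Zᵀ := by
  intro t ht s hs
  -- continuity of matrix-vector multiplication
  have hcontMV : ∀ {n m : ℕ} (M : Matrix (Fin n) (Fin m) ℝ),
      Continuous fun v : Fin m → ℝ => M.mulVec v := by
    intro n m M
    have := (LinearMap.toContinuousLinearMap M.mulVecLin).continuous
    exact this
  -- L² of components
  have hproj : ∀ {n : ℕ} (f : Ω → Fin n → ℝ), MemLp f 2 μ → ∀ j,
      MemLp (fun ω => f ω j) 2 μ := by
    intro n f hf j
    exact (ContinuousLinearMap.proj (R := ℝ) (φ := fun _ : Fin n => ℝ) j).comp_memLp' hf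
  have hMV2 : ∀ {n m : ℕ} (M : Matrix (Fin n) (Fin m) ℝ) (g : Ω → Fin m → ℝ),
      MemLp g 2 μ → MemLp (fun ω => M.mulVec (g ω)) 2 μ := by
    intro n m M g hg
    exact (LinearMap.toContinuousLinearMap M.mulVecLin).comp_memLp' hg
  have hy2 : ∀ r j, MemLp (fun ω => y r ω j) 2 μ := fun r => hproj _ (hy_L2 r)
  have hZa2 : ∀ r (j : Fin d), MemLp (fun ω => Z.mulVec (a r ω) j) 2 μ :=
    fun r => hproj _ (hMV2 Z _ (ha_L2 r))
  have he_L2 : ∀ r, MemLp (fun ω => a r ω - a' r ω) 2 μ :=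
    fun r => (ha_L2 r).sub (ha'_L2 r)
  have he2 : ∀ r (k : Fin p), MemLp (fun ω => a r ω k - a' r ω k) 2 μ :=
    fun r k => ((hproj _ (ha_L2 r) k).sub (hproj _ (ha'_L2 r) k))
  have hv'2 : ∀ r (i : Fin d), MemLp (fun ω => v' r ω i) 2 μ := by
    intro r i
    have : (fun ω => v' r ω i) = fun ω => y r ω i - Z.mulVec (a' r ω) i := by
      funext ω; rw [hv']; rfl
    rw [this]
    exact (hy2 r i).sub (hproj _ (hMV2 Z _ (ha'_L2 r)) i)
  have hvraw2 : ∀ r (j : Fin d), MemLp (fun ω => y r ω j - Z.mulVec (a r ω) j) 2 μ :=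
    fun r j => (hy2 r j).sub (hZa2 r j)
  -- measurability of a, a'
  have hma : ∀ n : ℕ, StronglyMeasurable[ℱ n] (a (n + 1)) := by
    intro n
    induction n with
    | zero =>
      rw [show a 1 = fun _ => a₁ from funext ha1]
      exact stronglyMeasurable_const
    | succ n ih =>
      have han : StronglyMeasurable[ℱ (n + 1)] (a (n + 1)) := ih.mono (ℱ.mono n.le_succ)
      have hyn := hy_meas (n + 1)
      rw [show a (n + 1 + 1) = fun ω => T.mulVec (a (n + 1) ω)
          + T.mulVec ((K (n + 1)).mulVec (y (n + 1) ω - Z.mulVec (a (n + 1) ω)))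
        from funext (ha (n + 1) (by omega))]
      exact ((hcontMV T).comp_stronglyMeasurable han).add
        ((hcontMV T).comp_stronglyMeasurable ((hcontMV (K (n + 1))).comp_stronglyMeasurable
          (hyn.sub ((hcontMV Z).comp_stronglyMeasurable han))))
  have hma' : ∀ n : ℕ, StronglyMeasurable[ℱ n] (a' (n + 1)) := by
    intro n
    induction n with
    | zero =>
      rw [show a' 1 = fun _ => a₁' from funext ha1']
      exact stronglyMeasurable_const
    | succ n ih =>
      have han : StronglyMeasurable[ℱ (n + 1)] (a' (n + 1)) := ih.mono (ℱ.mono n.le_succ)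
      have hyn := hy_meas (n + 1)
      rw [show a' (n + 1 + 1) = fun ω => T.mulVec (a' (n + 1) ω)
          + T.mulVec ((K' (n + 1)).mulVec (y (n + 1) ω - Z.mulVec (a' (n + 1) ω)))
        from funext (ha' (n + 1) (by omega))]
      exact ((hcontMV T).comp_stronglyMeasurable han).add
        ((hcontMV T).comp_stronglyMeasurable ((hcontMV (K' (n + 1))).comp_stronglyMeasurable
          (hyn.sub ((hcontMV Z).comp_stronglyMeasurable han))))
  -- measurability of v' t components w.r.t. ℱ t
  have hmv' : ∀ i : Fin d, StronglyMeasurable[ℱ t] (fun ω => v' t ω i) := by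
    intro i
    obtain ⟨n, rfl⟩ : ∃ n, t = n + 1 := ⟨t - 1, by omega⟩
    have h1 : StronglyMeasurable[ℱ (n + 1)] (v' (n + 1)) := by
      rw [show v' (n + 1) = fun ω => y (n + 1) ω - Z.mulVec (a' (n + 1) ω)
        from funext (hv' (n + 1))]
      exact (hy_meas (n + 1)).sub ((hcontMV Z).comp_stronglyMeasurable ((hma' n).mono (ℱ.mono n.le_succ)))
    exact (continuous_apply i).comp_stronglyMeasurable h1
  -- componentwise conditional expectation
  have hcondj : ∀ r, 1 ≤ r → ∀ j : Fin d,
      (fun ω => Z.mulVec (a r ω) j) =ᵐ[μ] μ[(fun ω => y r ω j) | ℱ (r - 1)] := by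
    intro r hr j
    have hyint : Integrable (y r) μ := (hy_L2 r).integrable one_le_two
    refine ae_eq_condExp_of_forall_setIntegral_eq (ℱ.le (r - 1))
      ((hy2 r j).integrable one_le_two) (fun sset _ _ => ?_) (fun sset hsm _ => ?_) ?_
    · exact ((hZa2 r j).integrable one_le_two).integrableOn
    · have h1 : ∫ x in sset, y r x j ∂μ
          = (ContinuousLinearMap.proj (R := ℝ) (φ := fun _ : Fin d => ℝ) j)
              (∫ x in sset, y r x ∂μ) :=
        (ContinuousLinearMap.proj (R := ℝ) (φ := fun _ : Fin d => ℝ) j).integral_comp_comm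
          hyint.restrict
      have h2 : ∫ x in sset, Z.mulVec (a r x) j ∂μ
          = (ContinuousLinearMap.proj (R := ℝ) (φ := fun _ : Fin d => ℝ) j)
              (∫ x in sset, Z.mulVec (a r x) ∂μ) :=
        (ContinuousLinearMap.proj (R := ℝ) (φ := fun _ : Fin d => ℝ) j).integral_comp_comm
          ((hMV2 Z _ (ha_L2 r)).integrable one_le_two).restrict
      rw [h1, h2]
      congr 1
      have h3 : ∫ x in sset, Z.mulVec (a r x) ∂μ = ∫ x in sset, (μ[y r | ℱ (r - 1)]) x ∂μ :=
        integral_congr_ae (ae_restrict_of_ae (hcond r hr).symm)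
      rw [h3, setIntegral_condExp (ℱ.le (r - 1)) hyint hsm]
    · refine StronglyMeasurable.aestronglyMeasurable ?_
      obtain ⟨n, rfl⟩ : ∃ n, r = n + 1 := ⟨r - 1, by omega⟩
      change StronglyMeasurable[ℱ n] _
      exact (continuous_apply j).comp_stronglyMeasurable
        ((hcontMV Z).comp_stronglyMeasurable (hma n))
  -- zero mean of true forecast errors
  have hmean : ∀ r, 1 ≤ r → ∀ j : Fin d,
      ∫ ω, y r ω j ∂μ = ∫ ω, Z.mulVec (a r ω) j ∂μ := by
    intro r hr j
    rw [integral_congr_ae (hcondj r hr j)]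
    exact (integral_condExp (ℱ.le (r - 1))).symm
  -- pull-out: orthogonality of v' t to future true forecast errors
  have hpull : ∀ r, t + 1 ≤ r → ∀ (i : Fin d) (j : Fin d),
      ∫ ω, v' t ω i * y r ω j ∂μ = ∫ ω, v' t ω i * Z.mulVec (a r ω) j ∂μ := by
    intro r hr i j
    have hFm : StronglyMeasurable[ℱ (r - 1)] (fun ω => v' t ω i) :=
      (hmv' i).mono (ℱ.mono (by omega))
    have hgint : Integrable (fun ω => y r ω j) μ := (hy2 r j).integrable one_le_two
    have hfg : Integrable (fun ω => v' t ω i * y r ω j) μ :=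
      l2_int_mul (hv'2 t i) (hy2 r j)
    have hpl := condExp_mul_of_stronglyMeasurable_left (μ := μ) hFm hfg hgint
    calc ∫ ω, v' t ω i * y r ω j ∂μ
        = ∫ ω, (μ[(fun ω => v' t ω i * y r ω j) | ℱ (r - 1)]) ω ∂μ :=
          (integral_condExp (ℱ.le (r - 1))).symm
      _ = ∫ ω, v' t ω i * (μ[(fun ω => y r ω j) | ℱ (r - 1)]) ω ∂μ :=
          integral_congr_ae hpl
      _ = ∫ ω, v' t ω i * Z.mulVec (a r ω) j ∂μ := by
          refine integral_congr_ae ?_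
          filter_upwards [hcondj r (by omega) j] with ω hω
          rw [← hω]
  -- covariance of v' t with true forecast errors vanishes
  have hcov0 : ∀ r, t + 1 ≤ r → ∀ (i : Fin d) (j : Fin d),
      (∫ ω, v' t ω i * (y r ω j - Z.mulVec (a r ω) j) ∂μ)
        - (∫ ω, v' t ω i ∂μ) * (∫ ω, (y r ω j - Z.mulVec (a r ω) j) ∂μ) = 0 := by
    intro r hr i j
    have h1 : (fun ω => v' t ω i * (y r ω j - Z.mulVec (a r ω) j))
        = fun ω => v' t ω i * y r ω j - v' t ω i * Z.mulVec (a r ω) j := by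
      funext ω; ring
    rw [h1, integral_sub (l2_int_mul (hv'2 t i) (hy2 r j))
        (l2_int_mul (hv'2 t i) (hZa2 r j)),
      integral_sub ((hy2 r j).integrable one_le_two) ((hZa2 r j).integrable one_le_two),
      hpull r hr i j, hmean r (by omega) j]
    ring
  -- the covariance matrices with the estimation-error process
  set Cm : ℕ → Matrix (Fin d) (Fin p) ℝ := fun r => Matrix.of fun i k =>
    (∫ ω, v' t ω i * (a r ω k - a' r ω k) ∂μ)
      - (∫ ω, v' t ω i ∂μ) * ∫ ω, (a r ω k - a' r ω k) ∂μ with hCm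
  -- pointwise recursion for the estimation error
  have hrec : ∀ r, 1 ≤ r → ∀ ω,
      a (r + 1) ω - a' (r + 1) ω
        = (T * L' r).mulVec (a r ω - a' r ω)
          + (T * (K r - K' r)).mulVec (y r ω - Z.mulVec (a r ω)) := by
    intro r hr ω
    rw [ha r hr ω, ha' r hr ω, hL']
    simp only [← Matrix.mulVec_mulVec, Matrix.sub_mulVec, Matrix.one_mulVec,
      Matrix.mulVec_sub, Matrix.mulVec_add]
    abel
  -- matrix recursion for the covariance matrices
  have hrecCm : ∀ r, t + 1 ≤ r → Cm (r + 1) = Cm r * (T * L' r)ᵀ := by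
    intro r hr
    ext i k
    have hre : ∀ ω, a (r + 1) ω k - a' (r + 1) ω k
        = (T * L' r).mulVec (a r ω - a' r ω) k
          + (T * (K r - K' r)).mulVec (y r ω - Z.mulVec (a r ω)) k := by
      intro ω
      have := congrFun (hrec r (by omega) ω) k
      simpa using this
    have hG2 : MemLp (fun ω => (T * L' r).mulVec (a r ω - a' r ω) k) 2 μ :=
      hproj _ (hMV2 (T * L' r) _ (he_L2 r)) k
    have hH2 : MemLp (fun ω => (T * (K r - K' r)).mulVec (y r ω - Z.mulVec (a r ω)) k) 2 μ :=
      hproj _ (hMV2 (T * (K r - K' r)) _ ((hy_L2 r).sub (hMV2 Z _ (ha_L2 r)))) k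
    show (∫ ω, v' t ω i * (a (r + 1) ω k - a' (r + 1) ω k) ∂μ)
        - (∫ ω, v' t ω i ∂μ) * ∫ ω, (a (r + 1) ω k - a' (r + 1) ω k) ∂μ
      = (Cm r * (T * L' r)ᵀ) i k
    simp only [hre]
    rw [cov_add_right (hv'2 t i) hG2 hH2]
    have hc1 := cov_mulVec (T * L' r) (hv'2 t i)
      (g := fun ω => a r ω - a' r ω) (fun k' => he2 r k') k
    have hc2 := cov_mulVec (T * (K r - K' r)) (hv'2 t i)
      (g := fun ω => y r ω - Z.mulVec (a r ω)) (fun k' => hvraw2 r k') k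
    rw [hc1, hc2]
    simp only [Pi.sub_apply]
    have hzero : ∑ k' : Fin d, (T * (K r - K' r)) k k' *
        ((∫ ω, v' t ω i * (y r ω k' - Z.mulVec (a r ω) k') ∂μ)
          - (∫ ω, v' t ω i ∂μ) * ∫ ω, (y r ω k' - Z.mulVec (a r ω) k') ∂μ) = 0 :=
      Finset.sum_eq_zero fun k' _ => by rw [hcov0 r hr i k', mul_zero]
    rw [hzero, add_zero, Matrix.mul_apply]
    exact Finset.sum_congr rfl fun k' _ => by
      simp only [hCm, Matrix.of_apply, Matrix.transpose_apply]; ring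
  -- iterated recursion
  have hCn : ∀ n : ℕ,
      Cm (t + 1 + n) = Cm (t + 1) *
        (((List.range n).map fun i => T * L' (t + n - i)).prod)ᵀ := by
    intro n
    induction n with
    | zero => simp
    | succ n ih =>
      have h1 : t + 1 + (n + 1) = (t + 1 + n) + 1 := by omega
      rw [h1, hrecCm (t + 1 + n) (by omega), ih]
      have h3 : ∀ i' ∈ List.range n,
          ((fun i => T * L' (t + (n + 1) - i)) ∘ Nat.succ) i'
            = (fun i => T * L' (t + n - i)) i' := by
        intro i' _
        simp only [Function.comp_apply]
        have : t + (n + 1) - Nat.succ i' = t + n - i' := by omega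
        rw [this]
      have h2 : ((List.range (n + 1)).map fun i => T * L' (t + (n + 1) - i)).prod
          = (T * L' (t + 1 + n)) * ((List.range n).map fun i => T * L' (t + n - i)).prod := by
        rw [List.range_succ_eq_map, List.map_cons, List.map_map, List.prod_cons,
          List.map_congr_left h3]
        have : t + (n + 1) - 0 = t + 1 + n := by omega
        rw [this]
      rw [h2]
      simp [Matrix.transpose_mul, Matrix.mul_assoc]
  -- assemble
  set F := fun i : Fin d => fun ω => v' t ω i with hF
  have hLHS : (Matrix.of fun i j =>
      ∫ ω, (v' t ω i - ∫ ω', v' t ω' i ∂μ)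
        * (v' (t + s) ω j - ∫ ω', v' (t + s) ω' j ∂μ) ∂μ) = Cm (t + s) * Zᵀ := by
    ext i j
    have h0 := cov_centered_eq (μ := μ) (hv'2 t i) (hv'2 (t + s) j)
    show ∫ ω, (v' t ω i - ∫ ω', v' t ω' i ∂μ)
        * (v' (t + s) ω j - ∫ ω', v' (t + s) ω' j ∂μ) ∂μ = (Cm (t + s) * Zᵀ) i j
    rw [h0]
    have hsplit : ∀ ω, v' (t + s) ω j
        = (y (t + s) ω j - Z.mulVec (a (t + s) ω) j)
          + Z.mulVec (a (t + s) ω - a' (t + s) ω) j := by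
      intro ω
      rw [hv']
      simp [Matrix.mulVec_sub]
      try ring
    simp only [hsplit]
    rw [cov_add_right (hv'2 t i) (hvraw2 (t + s) j) (hproj _ (hMV2 Z _ (he_L2 (t + s))) j)]
    rw [hcov0 (t + s) (by omega) i j, zero_add]
    rw [cov_mulVec Z (hv'2 t i) (g := fun ω => a (t + s) ω - a' (t + s) ω)
      (fun k => he2 (t + s) k) j]
    simp only [Pi.sub_apply]
    rw [Matrix.mul_apply]
    exact Finset.sum_congr rfl fun k _ => by
      simp only [hCm, Matrix.of_apply, Matrix.transpose_apply]; ring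
  have hRHS1 : (Matrix.of fun i j =>
      ∫ ω, (v' t ω i - ∫ ω', v' t ω' i ∂μ)
        * ((a (t + 1) ω j - a' (t + 1) ω j)
          - ∫ ω', (a (t + 1) ω' j - a' (t + 1) ω' j) ∂μ) ∂μ) = Cm (t + 1) := by
    ext i j
    exact cov_centered_eq (μ := μ) (hv'2 t i) (he2 (t + 1) j)
  rw [hLHS, hRHS1]
  have hn : t + s = t + 1 + (s - 1) := by omega
  have hprod : ((List.range (s - 1)).map fun i => T * L' (t + s - 1 - i)).prod
      = ((List.range (s - 1)).map fun i => T * L' (t + (s - 1) - i)).prod := by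
    congr 1
    refine List.map_congr_left fun i _ => ?_
    have : t + s - 1 - i = t + (s - 1) - i := by omega
    rw [this]
  rw [hprod, hn, hCn (s - 1), Matrix.mul_assoc]
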